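/- For squared Euclidean distance, the unbounded general adjuster equals additive adjustment: the matrix a minimizing Σ_i ‖p_{i·} − a_{i·}‖² subject to each row of a summing to 1 and column means (1/n)Σ_i a_{ij} = π_j, is given by a_{i·} = p_{i·} + ε with ε_j = π_j − (1/n)Σ_i p_{ij}. -/

import Mathlib

/-- The set `Q_π` of adjusted prediction matrices: rows sum to 1, column means equal `π`. -/
def Qpi (n k : ℕ) (π : Fin k → ℝ) : Set (Fin n → Fin k → ℝ) :=
  {a | (∀ i, ∑ j, a i j = 1) ∧ (∀ j, (1 / (n : ℝ)) * ∑ i, a i j = π j)}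

/-- for squared Euclidean distance the unbounded general adjuster is additive
adjustment: `a = p + ε` (with `ε_j = π_j − (1/n)Σ_i p_{ij}`) lies in `Q_π` and minimizes
`Σ_i ‖p_i − a_i‖²` over `Q_π`. -/
theorem uga_squared_euclidean_is_additive {n k : ℕ} (hn : 0 < n)
    (p : Fin n → Fin k → ℝ) (π : Fin k → ℝ)
    (hrows : ∀ i, ∑ j, p i j = 1) (hπs : ∑ j, π j = 1)
    (ε : Fin k → ℝ) (hε : ∀ j, ε j = π j - (1 / n) * ∑ i, p i j)
    (a : Fin n → Fin k → ℝ) (ha : ∀ i j, a i j = p i j + ε j) :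
    a ∈ Qpi n k π ∧
      ∀ b ∈ Qpi n k π, ∑ i, ∑ j, (p i j - a i j) ^ 2 ≤ ∑ i, ∑ j, (p i j - b i j) ^ 2 := by
  have hn' : (n : ℝ) ≠ 0 := Nat.cast_ne_zero.mpr hn.ne'
  constructor
  · constructor
    · intro i
      have hεs : ∑ j, ε j = 1 - (1 / n) * ∑ j, ∑ i, p i j := by
        rw [show (∑ j, ε j) = ∑ j, (π j - (1 / n) * ∑ i, p i j) from
          Finset.sum_congr rfl fun j _ => hε j]
        rw [Finset.sum_sub_distrib, hπs, ← Finset.mul_sum]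
      have hpp : ∑ j, ∑ i, p i j = n := by
        rw [Finset.sum_comm]
        simp [hrows]
      simp only [ha]
      rw [Finset.sum_add_distrib, hrows i, hεs, hpp]
      field_simp
      ring
    · intro j
      simp only [ha]
      rw [Finset.sum_add_distrib, Finset.sum_const, Finset.card_univ, Fintype.card_fin,
        nsmul_eq_mul, hε j, mul_add]
      field_simp
      ring
  · rintro b ⟨hb1, hb2⟩
    have key : ∀ j, ∑ i, (p i j - a i j) ^ 2 ≤ ∑ i, (p i j - b i j) ^ 2 := by
      intro j
      have hsum : ∑ i, (p i j - b i j) = -(n * ε j) := by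
        have hbj : ∑ i, b i j = n * π j := by
          have := hb2 j
          field_simp at this
          linarith [this]
        rw [Finset.sum_sub_distrib, hbj, hε j]
        field_simp
        ring
      have hcs : (∑ i, (p i j - b i j)) ^ 2 ≤
          (n : ℝ) * ∑ i, (p i j - b i j) ^ 2 := by
        have := sq_sum_le_card_mul_sum_sq (f := fun i : Fin n => p i j - b i j)
          (s := Finset.univ)
        simpa using this
      rw [hsum] at hcs
      have hleft : ∑ i, (p i j - a i j) ^ 2 = n * ε j ^ 2 := by
        simp [ha, Finset.sum_const, Finset.card_univ]
      rw [hleft]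
      have hnpos : (0 : ℝ) < n := Nat.cast_pos.mpr hn
      nlinarith [hcs, hnpos, sq_nonneg (ε j)]
    calc ∑ i, ∑ j, (p i j - a i j) ^ 2 = ∑ j, ∑ i, (p i j - a i j) ^ 2 := Finset.sum_comm
      _ ≤ ∑ j, ∑ i, (p i j - b i j) ^ 2 := Finset.sum_le_sum fun j _ => key j
      _ = ∑ i, ∑ j, (p i j - b i j) ^ 2 := Finset.sum_comm
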